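/- For β ∈ (0,1), λ > 0, N ≥ 2, let Z = ∑_{i=1}^{N−1} Z_i where Z_i are independent exponential with rates λNi, and set t* = (1/(λN))(log(N−1) − log(log(1/β))). Then P(Z > t*) = 1 − (1 + log β/(N−1))^{N−1}, and consequently P(Z > t*) → 1 − β as N → ∞. -/

import Mathlib

open MeasureTheory ProbabilityTheory Filter
open Real Set

lemma limit_part (β : ℝ) (hβ0 : 0 < β) :
    Tendsto (fun M : ℕ => 1 - (1 + Real.log β / ((M : ℝ) - 1)) ^ (M - 1)) atTop
      (nhds (1 - β)) := by
  have h1 : Tendsto (fun n : ℕ => (1 + Real.log β / (n : ℝ)) ^ n) atTop (nhds β) := by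
    simpa [Real.exp_log hβ0] using Real.tendsto_one_add_div_pow_exp (Real.log β)
  have h2 : Tendsto (fun M : ℕ => (1 + Real.log β / ((M - 1 : ℕ) : ℝ)) ^ (M - 1)) atTop
      (nhds β) := h1.comp (tendsto_sub_atTop_nat 1)
  have h3 : Tendsto (fun M : ℕ => (1 + Real.log β / ((M : ℝ) - 1)) ^ (M - 1)) atTop
      (nhds β) := by
    refine h2.congr' ?_
    filter_upwards [eventually_ge_atTop 1] with M hM
    rw [Nat.cast_sub hM, Nat.cast_one]
  simpa using h3.const_sub 1

lemma surv_one_of_neg {Ω : Type*} [MeasureSpace Ω] [IsProbabilityMeasure (ℙ : Measure Ω)]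
    {X : Ω → ℝ} {r : ℝ}
    (h0 : ℙ {ω | (0:ℝ) < X ω} = ENNReal.ofReal (Real.exp (-(r * 0)))) {a : ℝ} (ha : a < 0) :
    ℙ {ω | a < X ω} = 1 := by
  have h1 : ℙ {ω | (0:ℝ) < X ω} = 1 := by simpa using h0
  refine le_antisymm prob_le_one ?_
  calc (1 : ENNReal) = ℙ {ω | (0:ℝ) < X ω} := h1.symm
    _ ≤ ℙ {ω | a < X ω} := measure_mono (fun ω hω => lt_trans ha hω)

lemma map_eq_expMeasure {Ω : Type*} [MeasureSpace Ω] [IsProbabilityMeasure (ℙ : Measure Ω)]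
    {X : Ω → ℝ} (hX : Measurable X) {r : ℝ} (hr : 0 < r)
    (h : ∀ x : ℝ, 0 ≤ x → ℙ {ω | x < X ω} = ENNReal.ofReal (Real.exp (-(r * x)))) :
    Measure.map X ℙ = expMeasure r := by
  have hmap : IsProbabilityMeasure (Measure.map X ℙ) := Measure.isProbabilityMeasure_map hX.aemeasurable
  refine MeasureTheory.Measure.ext_of_Iic _ _ (fun a => ?_)
  have hIic : Measure.map X ℙ (Iic a) = ℙ {ω | X ω ≤ a} := by
    rw [Measure.map_apply hX measurableSet_Iic]; rfl
  have hcompl : ℙ {ω | X ω ≤ a} = 1 - ℙ {ω | a < X ω} := by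
    have : {ω | X ω ≤ a} = {ω | a < X ω}ᶜ := by ext ω; simp
    rw [this, measure_compl (measurableSet_lt measurable_const hX) (measure_ne_top _ _),
      measure_univ]
  have hRHS : expMeasure r (Iic a)
      = ENNReal.ofReal (if 0 ≤ a then 1 - Real.exp (-(r * a)) else 0) := by
    rw [show expMeasure r = (volume : Measure ℝ).withDensity (exponentialPDF r) from rfl,
      withDensity_apply _ measurableSet_Iic]
    exact lintegral_exponentialPDF_eq_antiDeriv hr a
  rw [hIic, hcompl, hRHS]
  rcases le_or_gt 0 a with ha | ha
  · rw [h a ha, if_pos ha, ← ENNReal.ofReal_one, ← ENNReal.ofReal_sub _ (exp_nonneg _)]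
  · rw [surv_one_of_neg (h 0 le_rfl) ha, if_neg (not_le.mpr ha), tsub_self, ENNReal.ofReal_zero]

lemma exp_factor (c t x : ℝ) :
    Real.exp (-(c*x)) - Real.exp (-(c*t)) = Real.exp (-(c*x)) * (1 - Real.exp (-(c*(t-x)))) := by
  rw [mul_sub, mul_one, ← Real.exp_add]
  congr 2
  ring

lemma exp_rate (c x : ℝ) (k : ℕ) :
    Real.exp (-(c*((k:ℝ)+1)*x)) = Real.exp (-(c*x)) * Real.exp (-(c*x)) ^ k := by
  rw [← Real.exp_nat_mul, ← Real.exp_add]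
  congr 1
  ring

lemma ftc_step {c : ℝ} (hc : 0 < c) (k : ℕ) {t : ℝ} (ht : 0 ≤ t) :
    ∫ x in (0)..t, c*((k:ℝ)+1) * Real.exp (-(c*((k:ℝ)+1)*x))
        * (1 - (1 - Real.exp (-(c*(t-x))))^k)
      = 1 - Real.exp (-(c*((k:ℝ)+1)*t)) - (1 - Real.exp (-(c*t)))^(k+1) := by
  set r : ℝ := c * ((k:ℝ)+1) with hr
  have hder : ∀ x : ℝ, HasDerivAt
      (fun y : ℝ => -Real.exp (-(r*y)) + (Real.exp (-(c*y)) - Real.exp (-(c*t)))^(k+1))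
      (r * Real.exp (-(r*x)) * (1 - (1 - Real.exp (-(c*(t-x))))^k)) x := by
    intro x
    have h1 : HasDerivAt (fun y : ℝ => -(r*y)) (-r) x := by
      simpa using ((hasDerivAt_id x).const_mul (-r))
    have h2 : HasDerivAt (fun y : ℝ => -Real.exp (-(r*y))) (-(Real.exp (-(r*x)) * (-r))) x :=
      (h1.exp).neg
    have h3 : HasDerivAt (fun y : ℝ => -(c*y)) (-c) x := by
      simpa using ((hasDerivAt_id x).const_mul (-c))
    have h4 : HasDerivAt (fun y : ℝ => Real.exp (-(c*y)) - Real.exp (-(c*t)))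
        (Real.exp (-(c*x)) * (-c)) x := (h3.exp).sub_const _
    have h5 := (h4.pow (k+1))
    have h6 := h2.add h5
    refine h6.congr_deriv ?_
    symm
    simp only [Nat.add_sub_cancel, Nat.cast_add, Nat.cast_one]
    rw [exp_factor c t x, mul_pow, hr, exp_rate c x k]
    ring
  have hcont : Continuous (fun x : ℝ => r * Real.exp (-(r*x))
      * (1 - (1 - Real.exp (-(c*(t-x))))^k)) := by fun_prop
  rw [intervalIntegral.integral_eq_sub_of_hasDerivAt (fun x _ => hder x)
    (hcont.intervalIntegrable 0 t)]
  simp only [mul_zero, neg_zero, Real.exp_zero, sub_self]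
  rw [zero_pow (Nat.succ_ne_zero k)]
  ring

lemma step_lemma {Ω : Type*} [MeasureSpace Ω] [IsProbabilityMeasure (ℙ : Measure Ω)]
    {X S : Ω → ℝ} (hX : Measurable X) (hS : Measurable S) (hind : IndepFun X S ℙ)
    {c : ℝ} (hc : 0 < c) (k : ℕ)
    (hsurvS : ∀ t : ℝ, ℙ {ω | t < S ω}
      = if 0 ≤ t then ENNReal.ofReal (1 - (1 - Real.exp (-(c*t)))^k) else 1)
    (hsurvX : ∀ x : ℝ, 0 ≤ x → ℙ {ω | x < X ω}
      = ENNReal.ofReal (Real.exp (-(c*((k:ℝ)+1) * x)))) :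
    ∀ t : ℝ, ℙ {ω | t < X ω + S ω}
      = if 0 ≤ t then ENNReal.ofReal (1 - (1 - Real.exp (-(c*t)))^(k+1)) else 1 := by
  intro t
  set r : ℝ := c * ((k:ℝ)+1) with hrdef
  have hr : 0 < r := by positivity
  by_cases ht : 0 ≤ t
  · rw [if_pos ht]
    have hmapX : Measure.map X ℙ = expMeasure r :=
      map_eq_expMeasure hX hr (fun x hx => hsurvX x hx)
    have hsetm : MeasurableSet {p : ℝ × ℝ | t < p.1 + p.2} :=
      measurableSet_lt measurable_const (measurable_fst.add measurable_snd)
    have h1 : ℙ {ω | t < X ω + S ω}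
        = (Measure.map (fun ω => (X ω, S ω)) ℙ) {p : ℝ × ℝ | t < p.1 + p.2} := by
      rw [Measure.map_apply (hX.prodMk hS) hsetm]; rfl
    rw [h1, (indepFun_iff_map_prod_eq_prod_map_map hX.aemeasurable hS.aemeasurable).mp hind,
      Measure.prod_apply hsetm]
    have hg : ∀ x : ℝ, Measure.map S ℙ (Prod.mk x ⁻¹' {p : ℝ × ℝ | t < p.1 + p.2})
        = if x ≤ t then ENNReal.ofReal (1 - (1 - Real.exp (-(c*(t-x))))^k) else 1 := by
      intro x
      have hpre : (Prod.mk x ⁻¹' {p : ℝ × ℝ | t < p.1 + p.2}) = {s : ℝ | t - x < s} := by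
        ext s; simp [sub_lt_iff_lt_add']
      rw [hpre, show {s : ℝ | t - x < s} = Ioi (t-x) from rfl,
        Measure.map_apply hS measurableSet_Ioi,
        show S ⁻¹' (Ioi (t-x)) = {ω | t - x < S ω} from rfl, hsurvS (t - x)]
      by_cases hx : x ≤ t
      · rw [if_pos (by linarith), if_pos hx]
      · rw [if_neg (by push_neg at hx ⊢; linarith), if_neg hx]
    rw [lintegral_congr hg, hmapX,
      show expMeasure r = (volume : Measure ℝ).withDensity (exponentialPDF r) from rfl]
    have hpdfmeas : Measurable (exponentialPDF r) :=
      (measurable_exponentialPDFReal r).ennreal_ofReal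
    have hgmeas : Measurable (fun x : ℝ =>
        if x ≤ t then ENNReal.ofReal (1 - (1 - Real.exp (-(c*(t-x))))^k) else 1) := by
      refine Measurable.ite measurableSet_Iic ?_ measurable_const
      exact (Continuous.measurable (by fun_prop)).ennreal_ofReal
    rw [lintegral_withDensity_eq_lintegral_mul _ hpdfmeas hgmeas]
    simp only [Pi.mul_apply]
    set F : ℝ → ENNReal := fun x => exponentialPDF r x *
      (if x ≤ t then ENNReal.ofReal (1 - (1 - Real.exp (-(c*(t-x))))^k) else 1) with hF
    have hFm : Measurable F := hpdfmeas.mul hgmeas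
    have hsplit0 : ∫⁻ x, F x = (∫⁻ x in Iic 0, F x) + ∫⁻ x in Ioi 0, F x := by
      have h := lintegral_add_compl F (measurableSet_Iic (a := (0:ℝ))) (μ := volume)
      rw [compl_Iic] at h
      exact h.symm
    have hzero : ∫⁻ x in Iic 0, F x = 0 := by
      rw [← setLIntegral_congr (Iio_ae_eq_Iic (μ := (volume : Measure ℝ)) (a := 0))]
      have hz2 : ∫⁻ x in Iio 0, F x = ∫⁻ x in Iio (0:ℝ), (0:ENNReal) :=
        setLIntegral_congr_fun_ae measurableSet_Iio
          (ae_of_all _ (fun x (hx : x < 0) => by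
            simp [hF, exponentialPDF_of_neg hx]))
      rw [hz2, lintegral_zero]
    have hsplit2 : ∫⁻ x in Ioi 0, F x
        = (∫⁻ x in Ioc 0 t, F x) + ∫⁻ x in Ioi t, F x := by
      rw [← Ioc_union_Ioi_eq_Ioi ht,
        lintegral_union measurableSet_Ioi (Ioc_disjoint_Ioi le_rfl)]
    have hA : ∫⁻ x in Ioc 0 t, F x
        = ENNReal.ofReal (1 - Real.exp (-(r*t)) - (1 - Real.exp (-(c*t)))^(k+1)) := by
      have hcongr : ∫⁻ x in Ioc 0 t, F x = ∫⁻ x in Ioc 0 t,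
          ENNReal.ofReal (r * Real.exp (-(r*x)) * (1 - (1 - Real.exp (-(c*(t-x))))^k)) := by
        refine setLIntegral_congr_fun_ae measurableSet_Ioc (ae_of_all _ (fun x hx => ?_))
        simp only [hF]
        rw [exponentialPDF_of_nonneg hx.1.le, if_pos hx.2,
          ← ENNReal.ofReal_mul (mul_nonneg hr.le (Real.exp_nonneg _))]
      rw [hcongr]
      have hint : IntegrableOn (fun x : ℝ =>
          r * Real.exp (-(r*x)) * (1 - (1 - Real.exp (-(c*(t-x))))^k)) (Ioc 0 t) volume :=
        (Continuous.integrableOn_Ioc (by fun_prop))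
      have hnn : 0 ≤ᵐ[volume.restrict (Ioc 0 t)] (fun x : ℝ =>
          r * Real.exp (-(r*x)) * (1 - (1 - Real.exp (-(c*(t-x))))^k)) := by
        refine (ae_restrict_iff' measurableSet_Ioc).mpr (ae_of_all _ (fun x hx => ?_))
        have h1 : Real.exp (-(c*(t-x))) ≤ 1 := by
          apply Real.exp_le_one_iff.mpr; nlinarith [hx.2, sub_nonneg.mpr hx.2]
        have h0 : (0:ℝ) ≤ 1 - Real.exp (-(c*(t-x))) := by linarith
        have h2 : (1 - Real.exp (-(c*(t-x))))^k ≤ 1 :=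
          pow_le_one₀ h0 (by linarith [Real.exp_nonneg (-(c*(t-x)))])
        simp only [Pi.zero_apply]
        exact mul_nonneg (mul_nonneg hr.le (Real.exp_nonneg _)) (by linarith)
      rw [← ofReal_integral_eq_lintegral_ofReal hint hnn,
        ← intervalIntegral.integral_of_le ht]
      congr 1
      simpa [hrdef] using ftc_step hc k ht
    have hB : ∫⁻ x in Ioi t, F x = ENNReal.ofReal (Real.exp (-(r*t))) := by
      have hcongr : ∫⁻ x in Ioi t, F x = ∫⁻ x in Ioi t, exponentialPDF r x := by
        refine setLIntegral_congr_fun_ae measurableSet_Ioi (ae_of_all _ (fun x hx => ?_))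
        simp only [hF, if_neg (not_le.mpr (mem_Ioi.mp hx)), mul_one]
      rw [hcongr, ← withDensity_apply _ measurableSet_Ioi,
        ← show expMeasure r = (volume : Measure ℝ).withDensity (exponentialPDF r) from rfl,
        ← hmapX, Measure.map_apply hX measurableSet_Ioi,
        show X ⁻¹' (Ioi t) = {ω | t < X ω} from rfl]
      exact hsurvX t ht
    rw [hsplit0, hzero, zero_add, hsplit2, hA, hB]
    have hu1 : Real.exp (-(c*t)) ≤ 1 := Real.exp_le_one_iff.mpr (by nlinarith)
    have hu0 : (0:ℝ) < Real.exp (-(c*t)) := Real.exp_pos _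
    have hrt : Real.exp (-(r*t)) = Real.exp (-(c*t)) ^ (k+1) := by
      rw [← Real.exp_nat_mul]; congr 1; push_cast; rw [hrdef]; ring
    have hp1 : (1 - Real.exp (-(c*t)))^(k+1) ≤ 1 - Real.exp (-(c*t)) :=
      pow_le_of_le_one (by linarith) (by linarith) (Nat.succ_ne_zero k)
    have hp2 : Real.exp (-(c*t)) ^ (k+1) ≤ Real.exp (-(c*t)) :=
      pow_le_of_le_one hu0.le hu1 (Nat.succ_ne_zero k)
    rw [← ENNReal.ofReal_add (by rw [hrt]; nlinarith) (Real.exp_nonneg _)]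
    congr 1
    ring
  · rw [if_neg ht]
    push_neg at ht
    have hXfull : ℙ {ω | (0:ℝ) < X ω} = 1 := by simpa using hsurvX 0 le_rfl
    have hSfull : ℙ {ω | t < S ω} = 1 := by rw [hsurvS t, if_neg (not_le.mpr ht)]
    have hAm : MeasurableSet {ω | (0:ℝ) < X ω} := measurableSet_lt measurable_const hX
    have hBm : MeasurableSet {ω | t < S ω} := measurableSet_lt measurable_const hS
    have hinter : ℙ ({ω | (0:ℝ) < X ω} ∩ {ω | t < S ω}) = 1 := by
      rw [← prob_compl_eq_zero_iff (hAm.inter hBm), Set.compl_inter]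
      refine le_antisymm (le_trans (measure_union_le _ _) ?_) zero_le
      rw [prob_compl_eq_zero_iff hAm |>.mpr hXfull, prob_compl_eq_zero_iff hBm |>.mpr hSfull,
        add_zero]
    refine le_antisymm prob_le_one ?_
    calc (1 : ENNReal) = ℙ ({ω | (0:ℝ) < X ω} ∩ {ω | t < S ω}) := hinter.symm
      _ ≤ ℙ {ω | t < X ω + S ω} :=
        measure_mono (fun ω hω => by
          have h1 := hω.1; have h2 := hω.2
          simp only [Set.mem_setOf_eq] at *
          linarith)

lemma erlang_surv {Ω : Type*} [MeasureSpace Ω] [IsProbabilityMeasure (ℙ : Measure Ω)]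
    {m : ℕ} (Z : Fin m → Ω → ℝ) (hmeas : ∀ i, Measurable (Z i))
    (hindep : iIndepFun Z ℙ)
    {c : ℝ} (hc : 0 < c)
    (hexp : ∀ i : Fin m, ∀ x : ℝ, 0 ≤ x →
      ℙ {ω | x < Z i ω} = ENNReal.ofReal (Real.exp (-(c * (((i : ℕ) : ℝ) + 1)) * x))) :
    ∀ k, k ≤ m → ∀ t : ℝ,
      ℙ {ω | t < ∑ i ∈ Finset.univ.filter (fun i : Fin m => (i:ℕ) < k), Z i ω}
        = if 0 ≤ t then ENNReal.ofReal (1 - (1 - Real.exp (-(c*t)))^k) else 1 := by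
  intro k
  induction k with
  | zero =>
    intro _ t
    have he : Finset.univ.filter (fun i : Fin m => (i:ℕ) < 0) = ∅ := by
      apply Finset.filter_false_of_mem
      intro i _
      omega
    rw [he]
    simp only [Finset.sum_empty, pow_zero, sub_self, ENNReal.ofReal_zero]
    by_cases ht : 0 ≤ t
    · rw [if_pos ht]
      have : {ω : Ω | t < 0} = ∅ := by
        ext ω; simp; linarith
      rw [this, measure_empty]
    · rw [if_neg ht]
      push_neg at ht
      have : {ω : Ω | t < 0} = univ := by
        ext ω; simp [ht]
      rw [this, measure_univ]
  | succ k ih =>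
    intro hk t
    have hkm : k < m := by omega
    set j : Fin m := ⟨k, hkm⟩ with hj
    set s : Finset (Fin m) := Finset.univ.filter (fun i : Fin m => (i:ℕ) < k) with hs
    have hjs : j ∉ s := by simp [hs, hj]
    have hins : Finset.univ.filter (fun i : Fin m => (i:ℕ) < k + 1) = insert j s := by
      ext i
      simp only [Finset.mem_filter, Finset.mem_univ, true_and, Finset.mem_insert, hs]
      constructor
      · intro h
        rcases Nat.lt_succ_iff_lt_or_eq.mp h with h | h
        · exact Or.inr (by simp [h])
        · exact Or.inl (Fin.ext h)
      · rintro (rfl | h)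
        · exact lt_add_one k
        · exact Nat.lt_succ_of_lt h
    have hsum : ∀ ω, ∑ i ∈ Finset.univ.filter (fun i : Fin m => (i:ℕ) < k + 1), Z i ω
        = Z j ω + ∑ i ∈ s, Z i ω := by
      intro ω
      rw [hins, Finset.sum_insert hjs]
    have hSmeas : Measurable (fun ω => ∑ i ∈ s, Z i ω) := by
      apply Finset.measurable_sum
      intro i _
      exact hmeas i
    have hind : IndepFun (Z j) (fun ω => ∑ i ∈ s, Z i ω) ℙ := by
      have h := (hindep.indepFun_finset_sum_of_notMem hmeas hjs).symm
      have heq : (∑ i ∈ s, Z i) = (fun ω => ∑ i ∈ s, Z i ω) := by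
        ext ω; simp [Finset.sum_apply]
      rwa [heq] at h
    have hsurvS := fun t => by
      have := ih (by omega) t
      exact this
    have hsurvX : ∀ x : ℝ, 0 ≤ x → ℙ {ω | x < Z j ω}
        = ENNReal.ofReal (Real.exp (-(c*((k:ℝ)+1) * x))) := by
      intro x hx
      have := hexp j x hx
      rw [this]
      norm_num [hj]
    have := step_lemma (hmeas j) hSmeas hind hc k hsurvS hsurvX t
    calc ℙ {ω | t < ∑ i ∈ Finset.univ.filter (fun i : Fin m => (i:ℕ) < k + 1), Z i ω}
        = ℙ {ω | t < Z j ω + ∑ i ∈ s, Z i ω} := by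
          congr 1; ext ω; simp only [Set.mem_setOf_eq, hsum]
      _ = if 0 ≤ t then ENNReal.ofReal (1 - (1 - Real.exp (-(c*t)))^(k+1)) else 1 := this

/-- For `β ∈ (0,1)`, `λ > 0`, `N ≥ 2`, if `Z = ∑_{i=1}^{N−1} Z_i` with `Z_i` independent
exponential of rate `λNi`, and `t* = (1/(λN))(log(N−1) − log(log(1/β)))`, then
`P(Z > t*) = 1 − (1 + log β/(N−1))^{N−1}`, and this quantity tends to `1 − β` as `N → ∞`. -/
theorem stmt_10 {Ω : Type*} [MeasureSpace Ω] [IsProbabilityMeasure (ℙ : Measure Ω)]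
    (β lam : ℝ) (hβ : β ∈ Set.Ioo (0 : ℝ) 1) (hlam : 0 < lam)
    (N : ℕ) (hN : 2 ≤ N) (Z : Fin (N - 1) → Ω → ℝ)
    (hmeas : ∀ i, Measurable (Z i))
    (hindep : iIndepFun Z ℙ)
    (hexp : ∀ i : Fin (N - 1), ∀ x : ℝ, 0 ≤ x →
      ℙ {ω | x < Z i ω} = ENNReal.ofReal (Real.exp (-(lam * N * ((i : ℕ) + 1)) * x)))
    (hpos : 0 < 1 + Real.log β / ((N : ℝ) - 1)) :
    ℙ {ω | (1 / (lam * N)) * (Real.log ((N : ℝ) - 1) - Real.log (Real.log (1 / β)))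
          < ∑ i, Z i ω}
        = ENNReal.ofReal (1 - (1 + Real.log β / ((N : ℝ) - 1)) ^ (N - 1)) ∧
    Tendsto (fun M : ℕ => 1 - (1 + Real.log β / ((M : ℝ) - 1)) ^ (M - 1)) atTop
      (nhds (1 - β)) := by

  refine ⟨?_, limit_part β hβ.1⟩
  have hNpos : (0:ℝ) < (N:ℝ) := by positivity
  have hc : (0:ℝ) < lam * N := mul_pos hlam hNpos
  have hN1 : (0:ℝ) < (N:ℝ) - 1 := by
    have : (2:ℝ) ≤ (N:ℝ) := by exact_mod_cast hN
    linarith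
  set L : ℝ := Real.log (1 / β) with hLdef
  have hlogβ : Real.log β = -L := by
    rw [hLdef, one_div, Real.log_inv, neg_neg]
  have hL : 0 < L := by
    rw [hLdef]
    exact Real.log_pos (one_lt_one_div hβ.1 hβ.2)
  have hLlt : L < (N:ℝ) - 1 := by
    rw [hlogβ, neg_div] at hpos
    have h1 : L / ((N:ℝ) - 1) < 1 := by linarith
    exact (div_lt_one hN1).mp h1
  set t : ℝ := (1 / (lam * N)) * (Real.log ((N : ℝ) - 1) - Real.log L) with htdef
  have ht0 : 0 ≤ t := by
    apply mul_nonneg (by positivity)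
    have := Real.log_lt_log hL hLlt
    linarith
  have hct : lam * ↑N * t = Real.log ((N : ℝ) - 1) - Real.log L := by
    rw [htdef]
    field_simp
  have hexpct : Real.exp (-(lam * ↑N * t)) = L / ((N:ℝ) - 1) := by
    rw [hct, neg_sub, Real.exp_sub, Real.exp_log hL, Real.exp_log hN1]
  have hfilter : (Finset.univ.filter (fun i : Fin (N-1) => (i:ℕ) < N - 1))
      = Finset.univ := Finset.filter_true_of_mem (fun i _ => i.isLt)
  have hmain := erlang_surv Z hmeas hindep hc
    (fun i x hx => by rw [hexp i x hx]) (N-1) le_rfl t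
  rw [hfilter, if_pos ht0] at hmain
  rw [hmain, hexpct]
  congr 2
  rw [hlogβ, neg_div]
  ring
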